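/- Let α > 0 and β > (1+√2)^α, let ℓ > 0, and let X be an axis-aligned square of side ℓ in ℝ². Then every finite set F of links that is β-feasible under uniform power with zero noise contains at most one link of length at least ℓ having an endpoint in X. Consequently, if L is a finite set of links each of length at least ℓ and each having an endpoint in X, then any partition of L into sets that are β-feasible under uniform power with zero noise has at least |L| parts. -/

import Mathlib

open Finset
open scoped Classical ENNReal

/-- A finite set of links (sender–receiver pairs in the plane) is `β`-feasible under uniform
power with zero noise, for path-loss exponent `α`: for every link `(s,r)` in the set,
`dist(s,r)⁻ᵅ ≥ β · Σ_{(s',r') ≠ (s,r)} dist(s',r)⁻ᵅ` (computed in `ℝ≥0∞`, so that a zero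
distance correctly yields infinite interference). -/
def UniformFeasible (α β : ℝ)
    (F : Finset (EuclideanSpace ℝ (Fin 2) × EuclideanSpace ℝ (Fin 2))) : Prop :=
  ∀ l ∈ F, ENNReal.ofReal β *
      ∑ l' ∈ F.erase l, ENNReal.ofReal (dist l'.1 l.2) ^ (-α) ≤
    ENNReal.ofReal (dist l.1 l.2) ^ (-α)


lemma key_real (α β c d D : ℝ) (hα : 0 < α) (hc : 0 < c) (hcβ : c ^ α < β)
    (hd : 0 < d) (hD : 0 < D) (h : β * D ^ (-α) ≤ d ^ (-α)) : c * d < D := by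
  by_contra hcon
  push_neg at hcon
  have hcd : 0 < c * d := mul_pos hc hd
  have h1 : (c * d) ^ (-α) ≤ D ^ (-α) :=
    Real.rpow_le_rpow_of_nonpos hD hcon (neg_nonpos.mpr hα.le)
  have hβ0 : 0 < β := (Real.rpow_pos_of_pos hc α).trans hcβ
  have h2 : β * (c * d) ^ (-α) ≤ d ^ (-α) :=
    le_trans (by nlinarith) h
  rw [Real.mul_rpow hc.le hd.le] at h2
  have hda : 0 < d ^ (-α) := Real.rpow_pos_of_pos hd _
  have hca : 0 < c ^ (-α) := Real.rpow_pos_of_pos hc _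
  have h3 : β * c ^ (-α) ≤ 1 := by
    nlinarith
  have h4 : c ^ (-α) = (c ^ α)⁻¹ := by
    rw [Real.rpow_neg hc.le]
  rw [h4] at h3
  have hca' : 0 < c ^ α := Real.rpow_pos_of_pos hc α
  have : β ≤ c ^ α := by
    rw [mul_inv_le_iff₀ hca', one_mul] at h3
    exact h3
  linarith

lemma key (α β c d D : ℝ) (hα : 0 < α) (hc : 0 < c) (hcβ : c ^ α < β)
    (hd : 0 < d) (hD : 0 ≤ D)
    (h : ENNReal.ofReal β * ENNReal.ofReal D ^ (-α) ≤ ENNReal.ofReal d ^ (-α)) :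
    c * d < D := by
  have hβ0 : 0 < β := (Real.rpow_pos_of_pos hc α).trans hcβ
  rw [ENNReal.ofReal_rpow_of_pos hd] at h
  rcases hD.eq_or_lt with rfl | hD
  · rw [ENNReal.ofReal_zero, ENNReal.zero_rpow_of_neg (by linarith), ENNReal.mul_top
      (by simpa using hβ0)] at h
    exact absurd (top_le_iff.mp h) ENNReal.ofReal_ne_top
  · rw [ENNReal.ofReal_rpow_of_pos hD, ← ENNReal.ofReal_mul hβ0.le,
      ENNReal.ofReal_le_ofReal_iff (Real.rpow_nonneg hd.le _)] at h
    exact key_real α β c d D hα hc hcβ hd hD h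

lemma sq_dist (ℓ : ℝ) (hℓ : 0 < ℓ) (a p q : EuclideanSpace ℝ (Fin 2))
    (hp : ∀ i, a i ≤ p i ∧ p i ≤ a i + ℓ) (hq : ∀ i, a i ≤ q i ∧ q i ≤ a i + ℓ) :
    dist p q ≤ Real.sqrt 2 * ℓ := by
  rw [EuclideanSpace.dist_eq]
  have h2 : Real.sqrt 2 * ℓ = Real.sqrt (2 * ℓ ^ 2) := by
    rw [Real.sqrt_mul (by norm_num), Real.sqrt_sq hℓ.le]
  rw [h2]
  apply Real.sqrt_le_sqrt
  rw [Fin.sum_univ_two]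
  simp only [Real.dist_eq, sq_abs]
  have h0 := hp 0; have h1 := hp 1; have h0' := hq 0; have h1' := hq 1
  have e0 : (p 0 - q 0) ^ 2 ≤ ℓ ^ 2 := by nlinarith [h0.1, h0.2, h0'.1, h0'.2]
  have e1 : (p 1 - q 1) ^ 2 ≤ ℓ ^ 2 := by nlinarith [h1.1, h1.2, h1'.1, h1'.2]
  nlinarith

lemma aux_single {ι : Type*} [DecidableEq ι] (F : Finset ι) (g : ι → ℝ≥0∞) (b C : ℝ≥0∞)
    (x y : ι) (hy : y ∈ F) (hxy : y ≠ x)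
    (h : b * ∑ l' ∈ F.erase x, g l' ≤ C) : b * g y ≤ C :=
  le_trans (mul_le_mul_right (Finset.single_le_sum (fun i _ => zero_le)
    (Finset.mem_erase.mpr ⟨hxy, hy⟩)) b) h

set_option maxHeartbeats 1000000 in
/-- For `β > (1+√2)^α`: any `β`-feasible (uniform power, zero noise) set contains at most one
link of length at least `ℓ` with an endpoint in a given square of side `ℓ`; consequently, any
partition into `β`-feasible sets of a set `L` of such links has at least `|L|` parts. -/
theorem dense_links_need_many_slots (α β : ℝ) (hα : 0 < α)
    (hβ : (1 + Real.sqrt 2) ^ α < β) (ℓ : ℝ) (hℓ : 0 < ℓ)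
    (a : EuclideanSpace ℝ (Fin 2)) :
    (∀ F : Finset (EuclideanSpace ℝ (Fin 2) × EuclideanSpace ℝ (Fin 2)),
      (∀ l ∈ F, l.1 ≠ l.2) → UniformFeasible α β F →
      (F.filter (fun l => ℓ ≤ dist l.1 l.2 ∧
        ((∀ i, a i ≤ l.1 i ∧ l.1 i ≤ a i + ℓ) ∨
         (∀ i, a i ≤ l.2 i ∧ l.2 i ≤ a i + ℓ)))).card ≤ 1) ∧
    ∀ L : Finset (EuclideanSpace ℝ (Fin 2) × EuclideanSpace ℝ (Fin 2)),
      (∀ l ∈ L, l.1 ≠ l.2 ∧ ℓ ≤ dist l.1 l.2 ∧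
        ((∀ i, a i ≤ l.1 i ∧ l.1 i ≤ a i + ℓ) ∨
         (∀ i, a i ≤ l.2 i ∧ l.2 i ≤ a i + ℓ))) →
      ∀ parts : Finset (Finset (EuclideanSpace ℝ (Fin 2) × EuclideanSpace ℝ (Fin 2))),
        (∀ p ∈ parts, UniformFeasible α β p) →
        (∀ p ∈ parts, p ⊆ L) →
        (∀ l ∈ L, ∃ p ∈ parts, l ∈ p) →
        (∀ p ∈ parts, ∀ q ∈ parts, p ≠ q → Disjoint p q) →
        L.card ≤ parts.card := by
  have hs2 : 1 ≤ Real.sqrt 2 := by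
    nlinarith [Real.sq_sqrt (by norm_num : (2:ℝ) ≥ 0), Real.sqrt_nonneg 2]
  have hc : (0:ℝ) < 1 + Real.sqrt 2 := by linarith
  have part1 : ∀ F : Finset (EuclideanSpace ℝ (Fin 2) × EuclideanSpace ℝ (Fin 2)),
      (∀ l ∈ F, l.1 ≠ l.2) → UniformFeasible α β F →
      (F.filter (fun l => ℓ ≤ dist l.1 l.2 ∧
        ((∀ i, a i ≤ l.1 i ∧ l.1 i ≤ a i + ℓ) ∨
         (∀ i, a i ≤ l.2 i ∧ l.2 i ≤ a i + ℓ)))).card ≤ 1 := by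
    intro F hne hfeas
    rw [Finset.card_le_one]
    intro l hl l' hl'
    by_contra hne'
    simp only [mem_filter] at hl hl'
    obtain ⟨hlF, hlen, hsq⟩ := hl
    obtain ⟨hl'F, hlen', hsq'⟩ := hl'
    have hd : 0 < dist l.1 l.2 := dist_pos.mpr (hne l hlF)
    have hd' : 0 < dist l'.1 l'.2 := dist_pos.mpr (hne l' hl'F)
    have hterm : ∀ x ∈ F, ∀ y ∈ F, y ≠ x →
        ENNReal.ofReal β * ENNReal.ofReal (dist y.1 x.2) ^ (-α) ≤
          ENNReal.ofReal (dist x.1 x.2) ^ (-α) := by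
      intro x hx y hy hxy
      exact aux_single F _ _ _ x y hy hxy (hfeas x hx)
    have D1 : (1 + Real.sqrt 2) * dist l.1 l.2 < dist l'.1 l.2 :=
      key α β _ _ _ hα hc hβ hd dist_nonneg (hterm l hlF l' hl'F (Ne.symm hne'))
    have D2 : (1 + Real.sqrt 2) * dist l'.1 l'.2 < dist l.1 l'.2 :=
      key α β _ _ _ hα hc hβ hd' dist_nonneg (hterm l' hl'F l hlF hne')
    rcases hsq with h1 | h1 <;> rcases hsq' with h2 | h2
    · have hss : dist l.1 l'.1 ≤ Real.sqrt 2 * ℓ := sq_dist ℓ hℓ a _ _ h1 h2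
      have tri : dist l'.1 l.2 ≤ dist l'.1 l.1 + dist l.1 l.2 := dist_triangle _ _ _
      rw [dist_comm l'.1 l.1] at tri
      nlinarith
    · have hss : dist l.1 l'.2 ≤ Real.sqrt 2 * ℓ := sq_dist ℓ hℓ a _ _ h1 h2
      nlinarith
    · have hss : dist l'.1 l.2 ≤ Real.sqrt 2 * ℓ := by
        rw [dist_comm]; exact sq_dist ℓ hℓ a _ _ h1 h2
      nlinarith
    · have hss : dist l.2 l'.2 ≤ Real.sqrt 2 * ℓ := sq_dist ℓ hℓ a _ _ h1 h2
      have tri1 : dist l'.1 l.2 ≤ dist l'.1 l'.2 + dist l'.2 l.2 := dist_triangle _ _ _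
      have tri2 : dist l.1 l'.2 ≤ dist l.1 l.2 + dist l.2 l'.2 := dist_triangle _ _ _
      rw [dist_comm l'.2 l.2] at tri1
      nlinarith
  refine ⟨part1, ?_⟩
  intro L hL parts hfeasp hsub hcov _
  have hp1 : ∀ p ∈ parts, p.card ≤ 1 := by
    intro p hp
    have h := part1 p (fun l hl => (hL l (hsub p hp hl)).1) (hfeasp p hp)
    rwa [Finset.filter_true_of_mem (fun l hl => (hL l (hsub p hp hl)).2)] at h
  have hLsub : L ⊆ parts.biUnion id := by
    intro l hl
    obtain ⟨p, hp, hlp⟩ := hcov l hl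
    exact Finset.mem_biUnion.mpr ⟨p, hp, hlp⟩
  calc L.card ≤ (parts.biUnion id).card := Finset.card_le_card hLsub
    _ ≤ ∑ p ∈ parts, p.card := Finset.card_biUnion_le
    _ ≤ ∑ _p ∈ parts, 1 := Finset.sum_le_sum hp1
    _ = parts.card := by simp
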